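/- Suppose E(a) is invertible in B. Then Ψ_a is a bijection of (a subset of) B(0, 2/(11‖a‖²‖E(a)⁻¹‖)) onto a neighborhood of 0 containing B(0, 1/(11‖a‖²‖E(a)⁻¹‖²)); moreover, for b in this domain, Ψ_a(b) = b·E(a)·(1 + E(a)⁻¹ Σ_{n≥1} E(a(ba)ⁿ)) where the last factor is invertible, so Ψ_a(b) is invertible in B if and only if b is invertible; in particular Ψ_a^{⟨−1⟩} maps invertible elements of B(0, 1/(11‖a‖²‖E(a)⁻¹‖²)) to invertible elements of B(0, 2/(11‖a‖²‖E(a)⁻¹‖)). -/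

import Mathlib

section Aux
variable {A : Type*} [NormedRing A] [NormedAlgebra ℂ A] [CompleteSpace A]

lemma aux_pow_sub_pow (x y : A) {M : ℝ} (hx : ‖x‖ ≤ M) (hy : ‖y‖ ≤ M) :
    ∀ n : ℕ, ‖x ^ (n + 1) - y ^ (n + 1)‖ ≤ (n + 1) * M ^ n * ‖x - y‖ := by
  have hM : 0 ≤ M := le_trans (norm_nonneg x) hx
  intro n
  induction n with
  | zero => simpa using le_refl ‖x - y‖
  | succ n ih =>
    have h1 : x ^ (n + 2) - y ^ (n + 2) = x ^ (n + 1) * (x - y) + (x ^ (n + 1) - y ^ (n + 1)) * y := by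
      noncomm_ring
    have hxp : ‖x ^ (n + 1)‖ ≤ M ^ (n + 1) :=
      (norm_pow_le' x (Nat.succ_pos n)).trans (pow_le_pow_left₀ (norm_nonneg x) hx _)
    calc ‖x ^ (n + 2) - y ^ (n + 2)‖
        ≤ ‖x ^ (n + 1) * (x - y)‖ + ‖(x ^ (n + 1) - y ^ (n + 1)) * y‖ := by
          rw [h1]; exact norm_add_le _ _
      _ ≤ M ^ (n + 1) * ‖x - y‖ + ((↑n + 1) * M ^ n * ‖x - y‖) * M := by
          have h2 : ‖x ^ (n + 1) * (x - y)‖ ≤ M ^ (n + 1) * ‖x - y‖ :=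
            (norm_mul_le _ _).trans (mul_le_mul_of_nonneg_right hxp (norm_nonneg _))
          have h3 : ‖(x ^ (n + 1) - y ^ (n + 1)) * y‖ ≤ ((↑n + 1) * M ^ n * ‖x - y‖) * M :=
            (norm_mul_le _ _).trans (mul_le_mul ih hy (norm_nonneg _) (by positivity))
          linarith
      _ ≤ (↑(n + 1) + 1) * M ^ (n + 1) * ‖x - y‖ :=
          le_of_eq (by push_cast; rw [pow_succ]; ring)

lemma aux_nat_le_two_pow (n : ℕ) : ((n : ℝ) + 2) ≤ 2 ^ (n + 1) := by
  induction n with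
  | zero => norm_num
  | succ n ih =>
    push_cast
    rw [pow_succ]
    push_cast at ih
    nlinarith [pow_pos (by norm_num : (0:ℝ) < 2) (n + 1)]

lemma aux_tsum_mem {B : Subalgebra ℂ A} (hB : IsClosed (B : Set A)) {f : ℕ → A}
    (hf : Summable f) (h : ∀ n, f n ∈ B) : ∑' n, f n ∈ B := by
  refine hB.mem_of_tendsto hf.hasSum.tendsto_sum_nat
    (Filter.Eventually.of_forall fun n => ?_)
  exact sum_mem fun i _ => h i

lemma aux_summable {f : ℕ → A} {C t : ℝ} (ht0 : 0 ≤ t) (ht1 : t < 1)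
    (h : ∀ n, ‖f n‖ ≤ C * t ^ n) : Summable f :=
  Summable.of_norm_bounded ((summable_geometric_of_lt_one ht0 ht1).mul_left C) h

lemma aux_tsum_norm_le {f : ℕ → A} {C t : ℝ} (ht0 : 0 ≤ t) (ht1 : t < 1)
    (h : ∀ n, ‖f n‖ ≤ C * t ^ n) : ‖∑' n, f n‖ ≤ C * (1 - t)⁻¹ := by
  have hg : Summable (fun n : ℕ => C * t ^ n) :=
    (summable_geometric_of_lt_one ht0 ht1).mul_left C
  have hfn : Summable (fun n => ‖f n‖) :=
    Summable.of_nonneg_of_le (fun n => norm_nonneg _) h hg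
  calc ‖∑' n, f n‖ ≤ ∑' n, ‖f n‖ := norm_tsum_le_tsum_norm hfn
    _ ≤ ∑' n : ℕ, C * t ^ n := Summable.tsum_le_tsum h hfn hg
    _ = C * (1 - t)⁻¹ := by
        rw [tsum_mul_left, tsum_geometric_of_lt_one ht0 ht1]

end Aux

/-- `Ψ_a(b) = E((1 - ba)⁻¹) - 1`. -/
noncomputable def PsiA {A : Type*} [NormedRing A] [NormedAlgebra ℂ A] [CompleteSpace A]
    (E : A →L[ℂ] A) (a b : A) : A :=
  E (Ring.inverse (1 - b * a)) - 1

set_option maxHeartbeats 1000000 in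
theorem stmt14 {A : Type*} [NormedRing A] [NormedAlgebra ℂ A] [CompleteSpace A]
    (B : Subalgebra ℂ A) (hB : IsClosed (B : Set A))
    (E : A →L[ℂ] A) (hrange : ∀ x : A, E x ∈ B) (hfix : ∀ x ∈ B, E x = x)
    (hnorm : ∀ x : A, ‖E x‖ ≤ ‖x‖)
    (hbimod : ∀ b₁ ∈ B, ∀ b₂ ∈ B, ∀ x : A, E (b₁ * x * b₂) = b₁ * E x * b₂)
    (a : A) (ha : a ≠ 0) (hEa : ∃ c ∈ B, E a * c = 1 ∧ c * E a = 1) :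
    (∀ b₀ ∈ B, ‖b₀‖ < 1 / (11 * ‖a‖ ^ 2 * ‖Ring.inverse (E a)‖ ^ 2) →
      ∃! b : A, b ∈ B ∧ ‖b‖ < 2 / (11 * ‖a‖ ^ 2 * ‖Ring.inverse (E a)‖) ∧
        PsiA E a b = b₀) ∧
    (∀ b ∈ B, ‖b‖ < 2 / (11 * ‖a‖ ^ 2 * ‖Ring.inverse (E a)‖) →
      PsiA E a b =
        b * E a * (1 + Ring.inverse (E a) * ∑' n : ℕ, E (a * (b * a) ^ (n + 1))) ∧
      IsUnit (1 + Ring.inverse (E a) * ∑' n : ℕ, E (a * (b * a) ^ (n + 1))) ∧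
      ((∃ c ∈ B, PsiA E a b * c = 1 ∧ c * PsiA E a b = 1) ↔
        (∃ c ∈ B, b * c = 1 ∧ c * b = 1))) ∧
    (∀ b₀ ∈ B, ‖b₀‖ < 1 / (11 * ‖a‖ ^ 2 * ‖Ring.inverse (E a)‖ ^ 2) →
      (∃ c ∈ B, b₀ * c = 1 ∧ c * b₀ = 1) →
      ∃ b ∈ B, ‖b‖ < 2 / (11 * ‖a‖ ^ 2 * ‖Ring.inverse (E a)‖) ∧
        PsiA E a b = b₀ ∧ ∃ c ∈ B, b * c = 1 ∧ c * b = 1) := by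
  classical
  obtain ⟨c, hcB, hc1, hc2⟩ := hEa
  haveI hnt : Nontrivial A := nontrivial_of_ne a 0 ha
  have hcinv : Ring.inverse (E a) = c := Ring.inverse_unit ⟨E a, c, hc1, hc2⟩
  rw [hcinv]
  have haX : 0 < ‖a‖ := norm_pos_iff.mpr ha
  have h1r : 1 ≤ ‖c‖ * ‖a‖ := by
    calc (1:ℝ) ≤ ‖(1:A)‖ := one_le_norm_one A
    _ = ‖c * E a‖ := by rw [hc2]
    _ ≤ ‖c‖ * ‖E a‖ := norm_mul_le _ _
    _ ≤ ‖c‖ * ‖a‖ := mul_le_mul_of_nonneg_left (hnorm a) (norm_nonneg c)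
  have hr : 0 < ‖c‖ := by nlinarith
  set r := ‖c‖ with hrdef
  set ρ := 2 / (11 * ‖a‖ ^ 2 * r) with hρdef
  have hρpos : 0 < ρ := by positivity
  set M := 2 / (11 * ‖a‖ * r) with hMdef
  have hM0 : 0 < M := by positivity
  have hM11 : M ≤ 2 / 11 := by
    rw [hMdef, div_le_div_iff₀ (by positivity) (by norm_num)]
    nlinarith
  have hM1 : M < 1 := lt_of_le_of_lt hM11 (by norm_num)
  have hρM : ρ * ‖a‖ = M := by
    rw [hρdef, hMdef]; field_simp
  have hE1 : E 1 = 1 := hfix 1 (one_mem B)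
  -- powers of b * a
  have hpow : ∀ (b : A) (n : ℕ), ‖(b * a) ^ (n + 1)‖ ≤ (‖b‖ * ‖a‖) ^ (n + 1) := by
    intro b n
    exact (norm_pow_le' _ (Nat.succ_pos n)).trans
      (pow_le_pow_left₀ (norm_nonneg _) (norm_mul_le b a) _)
  have hterm1 : ∀ (b : A) (n : ℕ),
      ‖E (a * (b * a) ^ (n + 1))‖ ≤ (‖a‖ * (‖b‖ * ‖a‖)) * (‖b‖ * ‖a‖) ^ n := by
    intro b n
    calc ‖E (a * (b * a) ^ (n + 1))‖ ≤ ‖a * (b * a) ^ (n + 1)‖ := hnorm _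
      _ ≤ ‖a‖ * ‖(b * a) ^ (n + 1)‖ := norm_mul_le _ _
      _ ≤ ‖a‖ * (‖b‖ * ‖a‖) ^ (n + 1) := mul_le_mul_of_nonneg_left (hpow b n) (norm_nonneg a)
      _ = (‖a‖ * (‖b‖ * ‖a‖)) * (‖b‖ * ‖a‖) ^ n := by rw [pow_succ]; ring
  have hterm2 : ∀ (b : A) (n : ℕ),
      ‖E ((b * a) ^ (n + 2))‖ ≤ ((‖b‖ * ‖a‖) * (‖b‖ * ‖a‖)) * (‖b‖ * ‖a‖) ^ n := by
    intro b n
    calc ‖E ((b * a) ^ (n + 2))‖ ≤ ‖(b * a) ^ (n + 2)‖ := hnorm _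
      _ ≤ (‖b‖ * ‖a‖) ^ (n + 2) := hpow b (n + 1)
      _ = ((‖b‖ * ‖a‖) * (‖b‖ * ‖a‖)) * (‖b‖ * ‖a‖) ^ n := by ring
  have hsum1 : ∀ b : A, ‖b‖ * ‖a‖ < 1 → Summable (fun n : ℕ => E (a * (b * a) ^ (n + 1))) :=
    fun b hb => aux_summable (by positivity) hb (hterm1 b)
  have hsum2 : ∀ b : A, ‖b‖ * ‖a‖ < 1 → Summable (fun n : ℕ => E ((b * a) ^ (n + 2))) :=
    fun b hb => aux_summable (by positivity) hb (hterm2 b)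
  have hsum0 : ∀ b : A, ‖b‖ * ‖a‖ < 1 → Summable (fun n : ℕ => E ((b * a) ^ n)) := by
    intro b hb
    have h1A : (1:ℝ) ≤ ‖(1:A)‖ := one_le_norm_one A
    refine aux_summable (C := ‖(1:A)‖) (t := ‖b‖ * ‖a‖) (by positivity) hb ?_
    intro n
    cases n with
    | zero => simpa using (hnorm 1)
    | succ n =>
      calc ‖E ((b * a) ^ (n + 1))‖ ≤ (‖b‖ * ‖a‖) ^ (n + 1) := (hnorm _).trans (hpow b n)
        _ ≤ ‖(1:A)‖ * (‖b‖ * ‖a‖) ^ (n + 1) :=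
            le_mul_of_one_le_left (by positivity) h1A
  have hsum0' : ∀ b : A, ‖b‖ * ‖a‖ < 1 → Summable (fun n : ℕ => E ((b * a) ^ (n + 1))) := by
    intro b hb
    refine aux_summable (C := ‖b‖ * ‖a‖) (t := ‖b‖ * ‖a‖) (by positivity) hb ?_
    intro n
    calc ‖E ((b * a) ^ (n + 1))‖ ≤ (‖b‖ * ‖a‖) ^ (n + 1) := (hnorm _).trans (hpow b n)
      _ = (‖b‖ * ‖a‖) * (‖b‖ * ‖a‖) ^ n := by rw [pow_succ]; ring
  have hEpow : ∀ b ∈ B, ∀ n : ℕ, E ((b * a) ^ (n + 1)) = b * E (a * (b * a) ^ n) := by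
    intro b hb n
    have h : (b * a) ^ (n + 1) = b * (a * (b * a) ^ n) * 1 := by
      rw [mul_one, pow_succ', mul_assoc]
    rw [h, hbimod b hb 1 (one_mem B), mul_one]
  have hPsiG : ∀ b ∈ B, ‖b‖ * ‖a‖ < 1 →
      PsiA E a b = b * E a + ∑' n : ℕ, E ((b * a) ^ (n + 2)) := by
    intro b hb hlt
    have hba1 : ‖b * a‖ < 1 := lt_of_le_of_lt (norm_mul_le b a) hlt
    have hgeom : Summable (fun n : ℕ => (b * a) ^ n) := summable_geometric_of_norm_lt_one hba1
    have e1 : E (Ring.inverse (1 - b * a)) = ∑' n : ℕ, E ((b * a) ^ n) := by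
      rw [← geom_series_eq_inverse _ hba1, E.map_tsum hgeom]
    have e2 : ∑' n : ℕ, E ((b * a) ^ n)
        = E ((b * a) ^ 0) + ∑' n : ℕ, E ((b * a) ^ (n + 1)) :=
      Summable.tsum_eq_zero_add (hsum0 b hlt)
    have e3 : ∑' n : ℕ, E ((b * a) ^ (n + 1))
        = E ((b * a) ^ (0 + 1)) + ∑' n : ℕ, E ((b * a) ^ (n + 1 + 1)) :=
      Summable.tsum_eq_zero_add (hsum0' b hlt)
    have e5 : E ((b * a) ^ (0 + 1)) = b * E a := by
      rw [hEpow b hb 0, pow_zero, mul_one]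
    have e6 : (fun n : ℕ => E ((b * a) ^ (n + 1 + 1))) = fun n : ℕ => E ((b * a) ^ (n + 2)) := rfl
    unfold PsiA
    rw [e1, e2, e3, e5, e6, pow_zero, hE1, add_sub_cancel_left]
  have hGS : ∀ b ∈ B, ‖b‖ * ‖a‖ < 1 →
      b * (∑' n : ℕ, E (a * (b * a) ^ (n + 1))) = ∑' n : ℕ, E ((b * a) ^ (n + 2)) := by
    intro b hb hlt
    calc b * ∑' n : ℕ, E (a * (b * a) ^ (n + 1))
        = ∑' n : ℕ, b * E (a * (b * a) ^ (n + 1)) := ((hsum1 b hlt).tsum_mul_left b).symm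
      _ = ∑' n : ℕ, E ((b * a) ^ (n + 2)) := tsum_congr fun n => (hEpow b hb (n + 1)).symm
  have hSmem : ∀ b : A, ‖b‖ * ‖a‖ < 1 → (∑' n : ℕ, E (a * (b * a) ^ (n + 1))) ∈ B :=
    fun b hlt => aux_tsum_mem hB (hsum1 b hlt) (fun n => hrange _)
  have hGmem : ∀ b : A, ‖b‖ * ‖a‖ < 1 → (∑' n : ℕ, E ((b * a) ^ (n + 2))) ∈ B :=
    fun b hlt => aux_tsum_mem hB (hsum2 b hlt) (fun n => hrange _)
  have hSnorm : ∀ b : A, ‖b‖ * ‖a‖ < 1 →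
      ‖∑' n : ℕ, E (a * (b * a) ^ (n + 1))‖ ≤ (‖a‖ * (‖b‖ * ‖a‖)) * (1 - ‖b‖ * ‖a‖)⁻¹ :=
    fun b hlt => aux_tsum_norm_le (by positivity) hlt (hterm1 b)
  have hGnorm : ∀ b : A, ‖b‖ * ‖a‖ < 1 →
      ‖∑' n : ℕ, E ((b * a) ^ (n + 2))‖ ≤ ((‖b‖ * ‖a‖) * (‖b‖ * ‖a‖)) * (1 - ‖b‖ * ‖a‖)⁻¹ :=
    fun b hlt => aux_tsum_norm_le (by positivity) hlt (hterm2 b)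
  have hfactor : ∀ b ∈ B, ‖b‖ * ‖a‖ < 1 →
      PsiA E a b = b * E a * (1 + c * ∑' n : ℕ, E (a * (b * a) ^ (n + 1))) := by
    intro b hb hlt
    rw [hPsiG b hb hlt, ← hGS b hb hlt]
    calc b * E a + b * (∑' n : ℕ, E (a * (b * a) ^ (n + 1)))
        = b * E a + b * ((E a * c) * (∑' n : ℕ, E (a * (b * a) ^ (n + 1)))) := by
          rw [hc1, one_mul]
      _ = b * E a * (1 + c * ∑' n : ℕ, E (a * (b * a) ^ (n + 1))) := by noncomm_ring
  have hinv119 : ∀ t : ℝ, t ≤ M → (1 - t)⁻¹ ≤ 11 / 9 := by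
    intro t ht
    have h9 : (9:ℝ)/11 ≤ 1 - t := by
      have := hM11; linarith
    calc (1 - t)⁻¹ ≤ ((9:ℝ)/11)⁻¹ := inv_anti₀ (by norm_num) h9
      _ = 11 / 9 := by norm_num
  have hGdiff : ∀ b b' : A, ‖b‖ ≤ ρ → ‖b'‖ ≤ ρ →
      ‖(∑' n : ℕ, E ((b * a) ^ (n + 2))) - ∑' n : ℕ, E ((b' * a) ^ (n + 2))‖
        ≤ 4 / (7 * r) * ‖b - b'‖ := by
    intro b b' hbρ hb'ρ
    have htb : ‖b‖ * ‖a‖ ≤ M := by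
      rw [← hρM]; exact mul_le_mul_of_nonneg_right hbρ (norm_nonneg a)
    have htb' : ‖b'‖ * ‖a‖ ≤ M := by
      rw [← hρM]; exact mul_le_mul_of_nonneg_right hb'ρ (norm_nonneg a)
    have hba : ‖b * a‖ ≤ M := (norm_mul_le _ _).trans htb
    have hb'a : ‖b' * a‖ ≤ M := (norm_mul_le _ _).trans htb'
    have hlb : ‖b‖ * ‖a‖ < 1 := lt_of_le_of_lt htb hM1
    have hlb' : ‖b'‖ * ‖a‖ < 1 := lt_of_le_of_lt htb' hM1
    have h2M0 : (0:ℝ) ≤ 2 * M := by positivity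
    have h2M1 : 2 * M < 1 := by linarith
    have hdterm : ∀ n : ℕ, ‖E ((b * a) ^ (n + 2)) - E ((b' * a) ^ (n + 2))‖
        ≤ ((2 * M) * ‖a‖ * ‖b - b'‖) * (2 * M) ^ n := by
      intro n
      rw [← map_sub]
      have hsub : ‖b * a - b' * a‖ ≤ ‖b - b'‖ * ‖a‖ := by
        rw [← sub_mul]; exact norm_mul_le _ _
      calc ‖E ((b * a) ^ (n + 2) - (b' * a) ^ (n + 2))‖
          ≤ ‖(b * a) ^ (n + 2) - (b' * a) ^ (n + 2)‖ := hnorm _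
        _ ≤ (↑(n + 1) + 1) * M ^ (n + 1) * ‖b * a - b' * a‖ :=
            aux_pow_sub_pow (b * a) (b' * a) hba hb'a (n + 1)
        _ ≤ 2 ^ (n + 1) * M ^ (n + 1) * (‖b - b'‖ * ‖a‖) := by
            have hcast : (↑(n + 1) + 1 : ℝ) = (n:ℝ) + 2 := by push_cast; ring
            have h2p : (↑(n + 1) + 1 : ℝ) ≤ 2 ^ (n + 1) := by
              rw [hcast]; exact aux_nat_le_two_pow n
            have hMp : (0:ℝ) ≤ M ^ (n + 1) := by positivity
            have hnn : (0:ℝ) ≤ (↑(n + 1) + 1 : ℝ) * M ^ (n + 1) := by positivity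
            exact mul_le_mul (mul_le_mul_of_nonneg_right h2p hMp) hsub (norm_nonneg _) (by positivity)
        _ = ((2 * M) * ‖a‖ * ‖b - b'‖) * (2 * M) ^ n := by
            rw [pow_succ, pow_succ, mul_pow]; ring
    have hbound := aux_tsum_norm_le h2M0 h2M1 hdterm
    rw [Summable.tsum_sub (hsum2 b hlb) (hsum2 b' hlb')] at hbound
    refine hbound.trans ?_
    have hinv7 : (1 - 2 * M)⁻¹ ≤ 11 / 7 := by
      have h7 : (7:ℝ)/11 ≤ 1 - 2 * M := by linarith
      calc (1 - 2 * M)⁻¹ ≤ ((7:ℝ)/11)⁻¹ := inv_anti₀ (by norm_num) h7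
        _ = 11 / 7 := by norm_num
    calc ((2 * M) * ‖a‖ * ‖b - b'‖) * (1 - 2 * M)⁻¹
        ≤ ((2 * M) * ‖a‖ * ‖b - b'‖) * (11 / 7) :=
          mul_le_mul_of_nonneg_left hinv7 (by positivity)
      _ = (2 * M * ‖a‖ * (11 / 7)) * ‖b - b'‖ := by ring
      _ = 4 / (7 * r) * ‖b - b'‖ := by
          rw [hMdef]; field_simp; ring
  -- second bullet
  have main2 : ∀ b ∈ B, ‖b‖ < ρ →
      PsiA E a b = b * E a * (1 + c * ∑' n : ℕ, E (a * (b * a) ^ (n + 1))) ∧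
      IsUnit (1 + c * ∑' n : ℕ, E (a * (b * a) ^ (n + 1))) ∧
      ((∃ d ∈ B, PsiA E a b * d = 1 ∧ d * PsiA E a b = 1) ↔
        ∃ d ∈ B, b * d = 1 ∧ d * b = 1) := by
    intro b hb hbρ
    have htM : ‖b‖ * ‖a‖ < M := by
      rw [← hρM]; exact mul_lt_mul_of_pos_right hbρ haX
    have hlt : ‖b‖ * ‖a‖ < 1 := htM.trans hM1
    have hSb := hSmem b hlt
    have hcS : ‖c * ∑' n : ℕ, E (a * (b * a) ^ (n + 1))‖ < 1 := by
      have hS2 : ‖∑' n : ℕ, E (a * (b * a) ^ (n + 1))‖ ≤ (‖a‖ * (‖b‖ * ‖a‖)) * (11 / 9) :=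
        (hSnorm b hlt).trans (mul_le_mul_of_nonneg_left (hinv119 _ htM.le) (by positivity))
      have hprod : ‖a‖ * r * (‖b‖ * ‖a‖) < 2 / 11 := by
        have h2 : ‖a‖ * r * M = 2 / 11 := by
          rw [hMdef]; field_simp
        nlinarith [mul_pos haX hr]
      calc ‖c * ∑' n : ℕ, E (a * (b * a) ^ (n + 1))‖
          ≤ r * ‖∑' n : ℕ, E (a * (b * a) ^ (n + 1))‖ := norm_mul_le _ _
        _ ≤ r * ((‖a‖ * (‖b‖ * ‖a‖)) * (11 / 9)) := mul_le_mul_of_nonneg_left hS2 hr.le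
        _ < 1 := by nlinarith
    set x := c * ∑' n : ℕ, E (a * (b * a) ^ (n + 1)) with hxdef
    have hxB : x ∈ B := mul_mem hcB hSb
    have hnx : ‖-x‖ < 1 := by rwa [norm_neg]
    have hunit : IsUnit (1 + x) := by
      have := isUnit_one_sub_of_norm_lt_one hnx
      rwa [sub_neg_eq_add] at this
    have huu1 : (1 + x) * (∑' n : ℕ, (-x) ^ n) = 1 := by
      have := mul_neg_geom_series (-x) hnx
      rwa [sub_neg_eq_add] at this
    have huu2 : (∑' n : ℕ, (-x) ^ n) * (1 + x) = 1 := by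
      have := geom_series_mul_neg (-x) hnx
      rwa [sub_neg_eq_add] at this
    have hxinvB : (∑' n : ℕ, (-x) ^ n) ∈ B :=
      aux_tsum_mem hB (summable_geometric_of_norm_lt_one hnx)
        (fun n => pow_mem (neg_mem hxB) n)
    set w := (∑' n : ℕ, (-x) ^ n) * c with hwdef
    have hwB : w ∈ B := mul_mem hxinvB hcB
    set v := E a * (1 + x) with hvdef
    have hvB : v ∈ B := mul_mem (hrange a) (add_mem (one_mem B) hxB)
    have hvw : v * w = 1 := by
      rw [hvdef, hwdef]
      calc E a * (1 + x) * ((∑' n : ℕ, (-x) ^ n) * c)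
          = E a * ((1 + x) * (∑' n : ℕ, (-x) ^ n)) * c := by noncomm_ring
        _ = 1 := by rw [huu1, mul_one, hc1]
    have hwv : w * v = 1 := by
      rw [hvdef, hwdef]
      calc (∑' n : ℕ, (-x) ^ n) * c * (E a * (1 + x))
          = (∑' n : ℕ, (-x) ^ n) * (c * E a) * (1 + x) := by noncomm_ring
        _ = 1 := by rw [hc2, mul_one, huu2]
    have hfact : PsiA E a b = b * E a * (1 + x) := hfactor b hb hlt
    have hΨv : PsiA E a b = b * v := by rw [hfact, hvdef, mul_assoc]
    refine ⟨hfact, hunit, ?_, ?_⟩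
    · rintro ⟨d, hdB, hd1, hd2⟩
      refine ⟨v * d, mul_mem hvB hdB, ?_, ?_⟩
      · calc b * (v * d) = (b * v) * d := (mul_assoc _ _ _).symm
          _ = 1 := by rw [← hΨv, hd1]
      · have hdb : d * b = w := by
          have h5 : (d * b) * v = 1 := by
            rw [mul_assoc, ← hΨv, hd2]
          calc d * b = (d * b) * (v * w) := by rw [hvw, mul_one]
            _ = ((d * b) * v) * w := (mul_assoc _ _ _).symm
            _ = w := by rw [h5, one_mul]
        calc (v * d) * b = v * (d * b) := mul_assoc _ _ _
          _ = 1 := by rw [hdb, hvw]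
    · rintro ⟨d, hdB, hd1, hd2⟩
      refine ⟨w * d, mul_mem hwB hdB, ?_, ?_⟩
      · calc PsiA E a b * (w * d) = (b * v) * (w * d) := by rw [hΨv]
          _ = b * (v * w) * d := by noncomm_ring
          _ = 1 := by rw [hvw, mul_one, hd1]
      · calc (w * d) * PsiA E a b = (w * d) * (b * v) := by rw [hΨv]
          _ = w * (d * b) * v := by noncomm_ring
          _ = 1 := by rw [hd2, mul_one, hwv]
  -- first bullet
  have main1 : ∀ b₀ ∈ B, ‖b₀‖ < 1 / (11 * ‖a‖ ^ 2 * r ^ 2) →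
      ∃! b : A, b ∈ B ∧ ‖b‖ < ρ ∧ PsiA E a b = b₀ := by
    intro b₀ hb₀B hb₀n
    have hb₀r : ‖b₀‖ * r < ρ / 2 := by
      have h1 : ‖b₀‖ * (11 * ‖a‖ ^ 2 * r ^ 2) < 1 :=
        (lt_div_iff₀ (mul_pos (mul_pos (by norm_num) (pow_pos haX 2)) (pow_pos hr 2))).mp hb₀n
      have hρ2 : ρ / 2 = 1 / (11 * ‖a‖ ^ 2 * r) := by rw [hρdef]; ring
      rw [hρ2, lt_div_iff₀ (mul_pos (mul_pos (by norm_num) (pow_pos haX 2)) hr)]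
      calc ‖b₀‖ * r * (11 * ‖a‖ ^ 2 * r) = ‖b₀‖ * (11 * ‖a‖ ^ 2 * r ^ 2) := by ring
        _ < 1 := h1
    set T : A → A := fun y => (b₀ - ∑' n : ℕ, E ((y * a) ^ (n + 2))) * c with hTdef
    set s : Set A := (B : Set A) ∩ Metric.closedBall 0 ρ with hsdef
    have hmem_s : ∀ y : A, y ∈ s ↔ y ∈ B ∧ ‖y‖ ≤ ρ := by
      intro y
      rw [hsdef, Set.mem_inter_iff, Metric.mem_closedBall, dist_zero_right]
      exact Iff.rfl
    have hscomplete : IsComplete s := (hB.inter Metric.isClosed_closedBall).isComplete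
    have hylt : ∀ y : A, ‖y‖ ≤ ρ → ‖y‖ * ‖a‖ < 1 := by
      intro y hy
      have : ‖y‖ * ‖a‖ ≤ M := by
        rw [← hρM]; exact mul_le_mul_of_nonneg_right hy (norm_nonneg a)
      exact lt_of_le_of_lt this hM1
    have hTnorm : ∀ y : A, ‖y‖ ≤ ρ → ‖T y‖ < ρ := by
      intro y hy
      have htM : ‖y‖ * ‖a‖ ≤ M := by
        rw [← hρM]; exact mul_le_mul_of_nonneg_right hy (norm_nonneg a)
      have ht0 : (0:ℝ) ≤ ‖y‖ * ‖a‖ := by positivity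
      have hGle : ‖∑' n : ℕ, E ((y * a) ^ (n + 2))‖ ≤ M * M * (11 / 9) := by
        calc ‖∑' n : ℕ, E ((y * a) ^ (n + 2))‖
            ≤ ((‖y‖ * ‖a‖) * (‖y‖ * ‖a‖)) * (1 - ‖y‖ * ‖a‖)⁻¹ := hGnorm y (hylt y hy)
          _ ≤ (M * M) * (11 / 9) :=
              mul_le_mul (mul_le_mul htM htM ht0 hM0.le) (hinv119 _ htM)
                (le_of_lt (inv_pos.mpr (by linarith [hylt y hy]))) (mul_pos hM0 hM0).le
          _ = M * M * (11 / 9) := by ring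
      have hMMρ : M * M * (11 / 9) * r = 2 / 9 * ρ := by
        rw [hMdef, hρdef]; field_simp
      calc ‖T y‖ ≤ ‖b₀ - ∑' n : ℕ, E ((y * a) ^ (n + 2))‖ * r := norm_mul_le _ _
        _ ≤ (‖b₀‖ + ‖∑' n : ℕ, E ((y * a) ^ (n + 2))‖) * r :=
            mul_le_mul_of_nonneg_right (norm_sub_le _ _) hr.le
        _ ≤ (‖b₀‖ + M * M * (11 / 9)) * r :=
            mul_le_mul_of_nonneg_right (add_le_add le_rfl hGle) hr.le
        _ = ‖b₀‖ * r + M * M * (11 / 9) * r := by ring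
        _ < ρ / 2 + M * M * (11 / 9) * r := by linarith
        _ = ρ / 2 + 2 / 9 * ρ := by rw [hMMρ]
        _ < ρ := by linarith
    have hsf : Set.MapsTo T s s := by
      intro y hy
      obtain ⟨hyB, hyρ⟩ := (hmem_s y).mp hy
      refine (hmem_s (T y)).mpr ⟨?_, (hTnorm y hyρ).le⟩
      exact mul_mem (sub_mem hb₀B (hGmem y (hylt y hyρ))) hcB
    have hTdist : ∀ y z : A, ‖y‖ ≤ ρ → ‖z‖ ≤ ρ → ‖T y - T z‖ ≤ 4 / 7 * ‖y - z‖ := by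
      intro y z hyρ hzρ
      have h1 : T y - T z
          = ((∑' n : ℕ, E ((z * a) ^ (n + 2))) - ∑' n : ℕ, E ((y * a) ^ (n + 2))) * c := by
        rw [hTdef]
        dsimp only
        rw [← sub_mul]
        congr 1
        abel
      rw [h1]
      calc ‖((∑' n : ℕ, E ((z * a) ^ (n + 2))) - ∑' n : ℕ, E ((y * a) ^ (n + 2))) * c‖
          ≤ ‖(∑' n : ℕ, E ((z * a) ^ (n + 2))) - ∑' n : ℕ, E ((y * a) ^ (n + 2))‖ * r :=
            norm_mul_le _ _
        _ ≤ (4 / (7 * r) * ‖z - y‖) * r :=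
            mul_le_mul_of_nonneg_right (hGdiff z y hzρ hyρ) hr.le
        _ = 4 / 7 * ‖z - y‖ := by field_simp
        _ = 4 / 7 * ‖y - z‖ := by rw [norm_sub_rev]
    have hcontr : ContractingWith (4/7 : NNReal) (hsf.restrict T s s) := by
      constructor
      · rw [← NNReal.coe_lt_coe]; push_cast; norm_num
      · apply LipschitzWith.of_dist_le_mul
        rintro ⟨y, hy⟩ ⟨z, hz⟩
        have hy' := ((hmem_s y).mp hy).2
        have hz' := ((hmem_s z).mp hz).2
        have hK : ((4/7 : NNReal) : ℝ) = 4 / 7 := by norm_num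
        rw [Subtype.dist_eq, Subtype.dist_eq, hK]
        calc dist (T y) (T z) = ‖T y - T z‖ := dist_eq_norm _ _
          _ ≤ 4 / 7 * ‖y - z‖ := hTdist y z hy' hz'
          _ = 4 / 7 * dist y z := by rw [dist_eq_norm]
    have h0s : (0 : A) ∈ s := (hmem_s 0).mpr ⟨zero_mem B, by simpa using hρpos.le⟩
    obtain ⟨b, hbs, hbfix, -, -⟩ :=
      hcontr.exists_fixedPoint' hscomplete hsf h0s (edist_ne_top _ _)
    obtain ⟨hbB, hbρ⟩ := (hmem_s b).mp hbs
    have hbfix' : T b = b := hbfix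
    have hbρ' : ‖b‖ < ρ := by
      rw [← hbfix']
      exact hTnorm b hbρ
    have h7 : (b₀ - ∑' n : ℕ, E ((b * a) ^ (n + 2))) * c = b := hbfix'
    have h8 : b₀ - ∑' n : ℕ, E ((b * a) ^ (n + 2)) = b * E a := by
      have h8' : (b₀ - ∑' n : ℕ, E ((b * a) ^ (n + 2))) * (c * E a)
          = b * E a := by rw [← mul_assoc, h7]
      rwa [hc2, mul_one] at h8'
    have hΨb : PsiA E a b = b₀ := by
      rw [hPsiG b hbB (hylt b hbρ), ← h8, sub_add_cancel]
    refine ⟨b, ⟨hbB, hbρ', hΨb⟩, ?_⟩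
    rintro b' ⟨hb'B, hb'ρ, hΨ'⟩
    have hfix2 : T b' = b' := by
      have h9 : b' * E a + ∑' n : ℕ, E ((b' * a) ^ (n + 2)) = b₀ := by
        rw [← hΨ', hPsiG b' hb'B (hylt b' hb'ρ.le)]
      show (b₀ - ∑' n : ℕ, E ((b' * a) ^ (n + 2))) * c = b'
      rw [← h9, add_sub_cancel_right, mul_assoc, hc1, mul_one]
    have hd := hTdist b' b hb'ρ.le hbρ
    rw [hfix2, hbfix'] at hd
    have hz : ‖b' - b‖ = 0 := by linarith [norm_nonneg (b' - b)]
    exact sub_eq_zero.mp (norm_eq_zero.mp hz)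
  refine ⟨main1, main2, ?_⟩
  intro b₀ hb₀B hb₀n hb₀inv
  obtain ⟨b, ⟨hbB, hbρ, hΨ⟩, -⟩ := main1 b₀ hb₀B hb₀n
  obtain ⟨-, -, hiff⟩ := main2 b hbB hbρ
  exact ⟨b, hbB, hbρ, hΨ, hiff.mp (by rw [hΨ]; exact hb₀inv)⟩
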